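/- arXiv:1208.5579 — 10 statements merged into one kernel-verified Lean document; each statement's English description precedes it below -/
import Mathlib

section
/- In every F-semilattice A, every unary term operation t_A : A → A is an endomorphism of A; consequently, for any two unary terms s and t, the identity s(t(x)) = t(s(x)) holds in all F-semilattices. -/
inductive SLTerm (F : Type) : Type where
  | var : SLTerm F
  | meet : SLTerm F → SLTerm F → SLTerm F
  | act : F → SLTerm F → SLTerm F

/-- Evaluation of a unary term at an element of an `F`-semilattice. -/
def SLTerm.eval {F A : Type} [SemilatticeInf A] [SMul F A] : SLTerm F → A → A
  | .var, a => a
  | .meet s t, a => s.eval a ⊓ t.eval a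
  | .act g t, a => g • t.eval a

inductive SLTermN (F : Type) : Type where
  | var : ℕ → SLTermN F
  | meet : SLTermN F → SLTermN F → SLTermN F
  | act : F → SLTermN F → SLTermN F

def SLTermN.eval {F A : Type} [SemilatticeInf A] [SMul F A] : SLTermN F → (ℕ → A) → A
  | .var n, v => v n
  | .meet s t, v => s.eval v ⊓ t.eval v
  | .act g t, v => g • t.eval v

def SatQI (F : Type) (A : Type) [SemilatticeInf A] [SMul F A]
    (prem : List (SLTermN F × SLTermN F)) (c : SLTermN F × SLTermN F) : Prop :=
  ∀ v : ℕ → A, (∀ p ∈ prem, p.1.eval v = p.2.eval v) → c.1.eval v = c.2.eval v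

/-- `B` belongs to the quasivariety generated by `A`. -/
def InQ (F : Type) (A B : Type) [SemilatticeInf A] [SMul F A]
    [SemilatticeInf B] [SMul F B] : Prop :=
  ∀ prem c, SatQI F A prem c → SatQI F B prem c

/-- `B` belongs to the variety generated by `A`. -/
def InV (F : Type) (A B : Type) [SemilatticeInf A] [SMul F A]
    [SemilatticeInf B] [SMul F B] : Prop :=
  ∀ s t : SLTermN F, (∀ v : ℕ → A, s.eval v = t.eval v) → ∀ v : ℕ → B, s.eval v = t.eval v

def IsHom (F : Type) {A B : Type} [SemilatticeInf A] [SMul F A] [SemilatticeInf B] [SMul F B]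
    (φ : A → B) : Prop :=
  (∀ x y : A, φ (x ⊓ y) = φ x ⊓ φ y) ∧ ∀ (g : F) (x : A), φ (g • x) = g • φ x

/-- The subuniverse of `A` generated by `a`. -/
def genSet (F : Type) {A : Type} [SemilatticeInf A] [SMul F A] (a : A) : Set A :=
  Set.range fun t : SLTerm F => t.eval a

/-- The quasivariety generated by `A` is a minimal quasivariety of `F`-semilattices. -/
def MinGen (F : Type) [CommGroup F] (A : Type) [SemilatticeInf A] [MulAction F A] : Prop :=
  Nontrivial A ∧
    ∀ (B : Type) [SemilatticeInf B] [MulAction F B],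
      (∀ (g : F) (x y : B), g • (x ⊓ y) = g • x ⊓ g • y) →
      InQ F A B → Nontrivial B → InQ F B A

lemma slterm_hom_inf {F A : Type} [CommGroup F] [SemilatticeInf A] [MulAction F A]
    (hA : ∀ (g : F) (x y : A), g • (x ⊓ y) = g • x ⊓ g • y) (t : SLTerm F) :
    ∀ x y : A, t.eval (x ⊓ y) = t.eval x ⊓ t.eval y := by
  induction t with
  | var => intro x y; rfl
  | meet a b iha ihb =>
      intro x y
      simp only [SLTerm.eval, iha, ihb]
      exact inf_inf_inf_comm _ _ _ _
  | act g a ih => intro x y; simp only [SLTerm.eval, ih, hA]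

lemma slterm_hom_smul {F A : Type} [CommGroup F] [SemilatticeInf A] [MulAction F A]
    (hA : ∀ (g : F) (x y : A), g • (x ⊓ y) = g • x ⊓ g • y) (t : SLTerm F) : ∀ (g : F) (x : A), t.eval (g • x) = g • t.eval x := by
  induction t with
  | var => intro g x; rfl
  | meet a b iha ihb => intro g x; simp only [SLTerm.eval, iha, ihb, hA]
  | act f a ih => intro g x; simp only [SLTerm.eval, ih, smul_smul, mul_comm]

/-- Every unary term operation is an endomorphism, and any two unary term operations commute. -/
theorem stmt_1 (F : Type) [CommGroup F] (A : Type) [SemilatticeInf A] [MulAction F A]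
    (hA : ∀ (g : F) (x y : A), g • (x ⊓ y) = g • x ⊓ g • y) (t : SLTerm F) :
    (∀ x y : A, t.eval (x ⊓ y) = t.eval x ⊓ t.eval y) ∧
    (∀ (g : F) (x : A), t.eval (g • x) = g • t.eval x) ∧
    (∀ (s : SLTerm F) (x : A), s.eval (t.eval x) = t.eval (s.eval x)) := by
  refine ⟨slterm_hom_inf hA t, slterm_hom_smul hA t, ?_⟩
  intro s
  induction s with
  | var => intro x; rfl
  | meet a b iha ihb =>
      intro x
      simp only [SLTerm.eval, iha, ihb, slterm_hom_inf hA t]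
  | act g a ih =>
      intro x
      simp only [SLTerm.eval, ih, slterm_hom_smul hA t]
end

section
/- Let A be an F-semilattice generated by a single element a. If s₁ and s₂ are unary terms with s₁(a) = s₂(a), then the identity s₁(x) = s₂(x) holds in A (and hence in the variety generated by A). -/
/-- Interpreting a unary term as a term in the variables `0, 1, 2, …` (using variable `0`). -/
def SLTerm.toN {F : Type} : SLTerm F → SLTermN F
  | .var => .var 0
  | .meet s t => .meet s.toN t.toN
  | .act g t => .act g t.toN

lemma SLTerm.eval_inf {F A : Type} [CommGroup F] [SemilatticeInf A] [MulAction F A]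
    (hA : ∀ (g : F) (x y : A), g • (x ⊓ y) = g • x ⊓ g • y)
    (t : SLTerm F) (x y : A) : t.eval (x ⊓ y) = t.eval x ⊓ t.eval y := by
  induction t with
  | var => rfl
  | meet s u hs hu =>
      simp only [SLTerm.eval, hs, hu]
      rw [inf_inf_inf_comm]
  | act g u hu => simp only [SLTerm.eval, hu, hA]

lemma SLTerm.eval_smul {F A : Type} [CommGroup F] [SemilatticeInf A] [MulAction F A]
    (hA : ∀ (g : F) (x y : A), g • (x ⊓ y) = g • x ⊓ g • y)
    (t : SLTerm F) (g : F) (x : A) : t.eval (g • x) = g • t.eval x := by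
  induction t with
  | var => rfl
  | meet s u hs hu => simp only [SLTerm.eval, hs, hu, hA]
  | act h u hu =>
      simp only [SLTerm.eval, hu, smul_smul, mul_comm]

lemma SLTerm.eval_comm {F A : Type} [CommGroup F] [SemilatticeInf A] [MulAction F A]
    (hA : ∀ (g : F) (x y : A), g • (x ⊓ y) = g • x ⊓ g • y)
    (s t : SLTerm F) (x : A) : s.eval (t.eval x) = t.eval (s.eval x) := by
  induction s with
  | var => rfl
  | meet u w hu hw =>
      simp only [SLTerm.eval, hu, hw, SLTerm.eval_inf hA]
  | act g u hu =>
      simp only [SLTerm.eval, hu, SLTerm.eval_smul hA]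

lemma SLTerm.toN_eval {F A : Type} [SemilatticeInf A] [SMul F A]
    (t : SLTerm F) (v : ℕ → A) : t.toN.eval v = t.eval (v 0) := by
  induction t with
  | var => rfl
  | meet s u hs hu => simp only [SLTerm.toN, SLTermN.eval, SLTerm.eval, hs, hu]
  | act g u hu => simp only [SLTerm.toN, SLTermN.eval, SLTerm.eval, hu]

/-- If `A` is generated by `a` and `s₁(a) = s₂(a)`, then `s₁(x) = s₂(x)` holds in `A`
and hence in the variety generated by `A`. -/
theorem stmt_4 (F : Type) [CommGroup F] (A : Type) [SemilatticeInf A] [MulAction F A]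
    (hA : ∀ (g : F) (x y : A), g • (x ⊓ y) = g • x ⊓ g • y)
    (a : A) (hgen : ∀ x : A, ∃ t : SLTerm F, t.eval a = x)
    (s₁ s₂ : SLTerm F) (h : s₁.eval a = s₂.eval a) :
    (∀ x : A, s₁.eval x = s₂.eval x) ∧
    (∀ (B : Type) [SemilatticeInf B] [MulAction F B],
      InV F A B → ∀ x : B, s₁.eval x = s₂.eval x) := by
  have hAll : ∀ x : A, s₁.eval x = s₂.eval x := by
    intro x
    obtain ⟨t, rfl⟩ := hgen x
    rw [SLTerm.eval_comm hA, SLTerm.eval_comm hA s₂, h]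
  refine ⟨hAll, fun B _ _ hV x => ?_⟩
  have := hV s₁.toN s₂.toN (fun v => by
    rw [SLTerm.toN_eval, SLTerm.toN_eval, hAll]) (fun _ => x)
  rwa [SLTerm.toN_eval, SLTerm.toN_eval] at this
end

section
/- Let A be an F-semilattice generated by a single element a and having a least element o. If s is a unary term with s(a) = o, then the identity s(x) ∧ y = s(x) holds in A. -/
/-- If `A` is generated by `a`, has least element `o`, and `s(a) = o`, then the identity
`s(x) ⊓ y = s(x)` holds in `A`. -/
theorem stmt_5 (F : Type) [CommGroup F] (A : Type) [SemilatticeInf A] [MulAction F A]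
    (hA : ∀ (g : F) (x y : A), g • (x ⊓ y) = g • x ⊓ g • y)
    (o : A) (ho : ∀ x : A, o ≤ x)
    (a : A) (hgen : ∀ x : A, ∃ t : SLTerm F, t.eval a = x)
    (s : SLTerm F) (h : s.eval a = o) :
    ∀ x y : A, s.eval x ⊓ y = s.eval x := by
  -- monotonicity of the action
  have hmono : ∀ (g : F) (x y : A), x ≤ y → g • x ≤ g • y := by
    intro g x y hxy
    have : g • (x ⊓ y) = g • x ⊓ g • y := hA g x y
    rw [inf_eq_left.mpr hxy] at this
    exact this ▸ inf_le_right
  -- g • o = o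
  have hgo : ∀ g : F, g • o = o := by
    intro g
    refine le_antisymm ?_ (ho _)
    have := hmono g⁻¹ (g • o) (g • o) le_rfl
    have h1 : g • o ≤ g • (g⁻¹ • o) := hmono g _ _ (ho _)
    rwa [smul_inv_smul] at h1
  -- every term is below some translate of its argument
  have hbelow : ∀ (t : SLTerm F) (x : A), ∃ g : F, t.eval x ≤ g • x := by
    intro t x
    induction t with
    | var => exact ⟨1, by simp [SLTerm.eval]⟩
    | meet u v ihu ihv =>
      obtain ⟨g, hg⟩ := ihu
      exact ⟨g, le_trans inf_le_left hg⟩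
    | act h t iht =>
      obtain ⟨g, hg⟩ := iht
      refine ⟨h * g, ?_⟩
      have := hmono h _ _ hg
      rwa [mul_smul]
  -- eval commutes with the action (F abelian)
  have hcomm : ∀ (t : SLTerm F) (g : F) (x : A), t.eval (g • x) = g • t.eval x := by
    intro t g x
    induction t with
    | var => rfl
    | meet u v ihu ihv =>
      show u.eval (g • x) ⊓ v.eval (g • x) = g • (u.eval x ⊓ v.eval x)
      rw [ihu, ihv, hA]
    | act h t iht =>
      show h • t.eval (g • x) = g • (h • t.eval x)
      rw [iht, ← mul_smul, ← mul_smul, mul_comm]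
  -- eval monotone in the argument
  have hevmono : ∀ (t : SLTerm F) (x y : A), x ≤ y → t.eval x ≤ t.eval y := by
    intro t x y hxy
    induction t with
    | var => exact hxy
    | meet u v ihu ihv => exact inf_le_inf ihu ihv
    | act h t iht => exact hmono h _ _ iht
  -- s vanishes everywhere
  have hzero : ∀ x : A, s.eval x = o := by
    intro x
    obtain ⟨t, ht⟩ := hgen x
    obtain ⟨g, hg⟩ := hbelow t a
    have h1 : s.eval x ≤ s.eval (g • a) := ht ▸ hevmono s _ _ hg
    rw [hcomm, h, hgo] at h1
    exact le_antisymm h1 (ho _)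
  intro x y
  rw [hzero x]
  exact inf_eq_left.mpr (ho y)
end

section
/- If A is a 1-generated F-semilattice and {d} is a one-element subalgebra of A (so d ∧ d = d and g(d) = d for all g ∈ F), then d is the least element of A. -/
/-- If `{d}` is a one-element subalgebra of a `1`-generated `F`-semilattice `A`,
then `d` is the least element of `A`. -/
theorem stmt_7 (F : Type) [CommGroup F] (A : Type) [SemilatticeInf A] [MulAction F A]
    (hA : ∀ (g : F) (x y : A), g • (x ⊓ y) = g • x ⊓ g • y)
    (a : A) (hgen : ∀ x : A, ∃ t : SLTerm F, t.eval a = x)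
    (d : A) (hd_inf : d ⊓ d = d) (hd : ∀ g : F, g • d = d) :
    ∀ x : A, d ≤ x := by
  have mono : ∀ (g : F) (x y : A), x ≤ y → g • x ≤ g • y := by
    intro g x y hxy
    have : g • (x ⊓ y) = g • x ⊓ g • y := hA g x y
    rw [inf_eq_left.2 hxy] at this
    exact this ▸ inf_le_right
  -- every term evaluated at a is ≤ g • a for some g
  have ub : ∀ t : SLTerm F, ∃ g : F, t.eval a ≤ g • a := by
    intro t
    induction t with
    | var => exact ⟨1, by simp [SLTerm.eval]⟩
    | meet s t ihs iht =>
      obtain ⟨g, hg⟩ := ihs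
      exact ⟨g, le_trans inf_le_left hg⟩
    | act h t iht =>
      obtain ⟨g, hg⟩ := iht
      refine ⟨h * g, ?_⟩
      have := mono h _ _ hg
      rwa [smul_smul] at this
  -- d ≤ a
  have hda : d ≤ a := by
    obtain ⟨t, ht⟩ := hgen d
    obtain ⟨g, hg⟩ := ub t
    rw [ht] at hg
    have := mono g⁻¹ _ _ hg
    rwa [hd, smul_smul, inv_mul_cancel, one_smul] at this
  intro x
  obtain ⟨s, hs⟩ := hgen x
  rw [← hs]
  clear hs
  induction s with
  | var => exact hda
  | meet s t ihs iht => exact le_inf ihs iht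
  | act g t iht =>
    have := mono g _ _ iht
    rwa [hd] at this
end

section
/- For a subgroup H of an abelian group F, the Maróti semilattice M(H,F) — whose universe is {∅} ∪ {gH : g ∈ F}, with meet given by intersection and with f acting by f(gH) = fgH and f(∅) = ∅ — is an F-semilattice, and if H is a proper subgroup then M(H,F) is generated by each of its nonzero elements; consequently M(H,F) generates a minimal quasivariety of F-semilattices. -/
open Pointwise

/-- The universe of the Maróti semilattice: the empty set together with all
left cosets of `H`. -/
def Maroti (F : Type) [CommGroup F] (H : Subgroup F) : Type :=
  {S : Set F // S = ∅ ∨ ∃ g : F, S = g • (H : Set F)}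

namespace Maroti

variable {F : Type} [CommGroup F] {H : Subgroup F}

theorem coset_eq_of_mem {g₁ g₂ x : F} (h1 : x ∈ g₁ • (H : Set F))
    (h2 : x ∈ g₂ • (H : Set F)) : g₁ • (H : Set F) = g₂ • (H : Set F) := by
  rw [Set.mem_smul_set_iff_inv_smul_mem, smul_eq_mul] at h1 h2
  ext z
  simp only [Set.mem_smul_set_iff_inv_smul_mem, smul_eq_mul]
  constructor
  · intro hz
    have : g₂⁻¹ * z = (g₂⁻¹ * x) * (g₁⁻¹ * x)⁻¹ * (g₁⁻¹ * z) := by group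
    rw [this]
    exact H.mul_mem (H.mul_mem h2 (H.inv_mem h1)) hz
  · intro hz
    have : g₁⁻¹ * z = (g₁⁻¹ * x) * (g₂⁻¹ * x)⁻¹ * (g₂⁻¹ * z) := by group
    rw [this]
    exact H.mul_mem (H.mul_mem h1 (H.inv_mem h2)) hz

theorem inter_mem {S T : Set F} (hS : S = ∅ ∨ ∃ g : F, S = g • (H : Set F))
    (hT : T = ∅ ∨ ∃ g : F, T = g • (H : Set F)) :
    S ∩ T = ∅ ∨ ∃ g : F, S ∩ T = g • (H : Set F) := by
  rcases hS with rfl | ⟨g₁, rfl⟩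
  · left; simp
  rcases hT with rfl | ⟨g₂, rfl⟩
  · left; simp
  rcases Set.eq_empty_or_nonempty (g₁ • (H : Set F) ∩ g₂ • (H : Set F)) with he | ⟨x, hx₁, hx₂⟩
  · left; exact he
  · right
    refine ⟨g₂, ?_⟩
    rw [coset_eq_of_mem hx₁ hx₂, Set.inter_self]

instance : Min (Maroti F H) :=
  ⟨fun x y => ⟨x.1 ∩ y.1, inter_mem x.2 y.2⟩⟩

theorem inf_val (x y : Maroti F H) : (x ⊓ y).1 = x.1 ∩ y.1 := rfl

instance : SemilatticeInf (Maroti F H) :=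
  SemilatticeInf.mk' (fun x y => Subtype.ext (Set.inter_comm x.1 y.1))
    (fun x y z => Subtype.ext (Set.inter_assoc x.1 y.1 z.1))
    (fun x => Subtype.ext (Set.inter_self x.1))

noncomputable instance : SMul F (Maroti F H) :=
  ⟨fun g x => ⟨g • x.1, by
    rcases x.2 with h | ⟨g', h⟩
    · left; rw [h]; exact Set.smul_set_empty
    · right; exact ⟨g * g', by rw [h, smul_smul]⟩⟩⟩

theorem smul_val (g : F) (x : Maroti F H) : (g • x).1 = g • x.1 := rfl

noncomputable instance : MulAction F (Maroti F H) where
  one_smul x := Subtype.ext (one_smul F x.1)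
  mul_smul g h x := Subtype.ext (mul_smul g h x.1)

end Maroti

/-- The distinguished generator `1 • H` of the Maróti semilattice. -/
noncomputable def marotiGen (F : Type) [CommGroup F] (H : Subgroup F) : Maroti F H :=
  ⟨(1 : F) • (H : Set F), Or.inr ⟨1, rfl⟩⟩


section Aux

open Maroti

variable {F : Type} [CommGroup F] {H : Subgroup F}

lemma mem_coset_self (g : F) : g ∈ g • (H : Set F) := by
  rw [Set.mem_smul_set]
  exact ⟨1, H.one_mem, mul_one g⟩

lemma coset_ne_empty (g : F) : g • (H : Set F) ≠ ∅ := by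
  intro h
  have := mem_coset_self (H := H) g
  rw [h] at this
  exact this

lemma mem_of_coset_eq {g g' : F} (h : g • (H : Set F) = g' • (H : Set F)) :
    g'⁻¹ * g ∈ H := by
  have hm : g ∈ g' • (H : Set F) := h ▸ mem_coset_self g
  rw [Set.mem_smul_set] at hm
  obtain ⟨b, hb, hgb⟩ := hm
  have : b = g'⁻¹ * g := by rw [← hgb, smul_eq_mul, inv_mul_cancel_left]
  rwa [← this]

lemma coset_smul_mem {h : F} (hh : h ∈ H) (g : F) :
    h • (g • (H : Set F)) = g • (H : Set F) := by
  rw [smul_smul]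
  refine coset_eq_of_mem (x := h * g) (mem_coset_self _) ?_
  rw [Set.mem_smul_set]
  exact ⟨h, hh, by rw [smul_eq_mul, mul_comm]⟩

lemma coset_eq_of_rel {g g' : F} (h : g'⁻¹ * g ∈ H) :
    g • (H : Set F) = g' • (H : Set F) := by
  have := coset_smul_mem h g'
  rwa [smul_smul, mul_comm (g'⁻¹ * g) g', mul_inv_cancel_left] at this

lemma coset_disjoint {g g' : F} (h : g'⁻¹ * g ∉ H) :
    g • (H : Set F) ∩ g' • (H : Set F) = ∅ := by
  by_contra hne
  obtain ⟨x, hx1, hx2⟩ := Set.nonempty_iff_ne_empty.2 hne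
  exact h (mem_of_coset_eq (coset_eq_of_mem hx1 hx2))

lemma bot_val {k : F} (hk : k ∉ H) (x : Maroti F H) : (k • x ⊓ x).1 = ∅ := by
  rw [Maroti.inf_val, Maroti.smul_val]
  rcases x.2 with h0 | ⟨g, hg⟩
  · rw [h0, Set.smul_set_empty, Set.empty_inter]
  · rw [hg, smul_smul]
    apply coset_disjoint
    rwa [mul_comm k g, inv_mul_cancel_left]

lemma satA1 {h : F} (hh : h ∈ H) :
    SatQI F (Maroti F H) [] (.act h (.var 0), .var 0) := by
  intro v _
  show h • v 0 = v 0
  apply Subtype.ext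
  rw [Maroti.smul_val]
  rcases (v 0).2 with h0 | ⟨g, hg⟩
  · rw [h0, Set.smul_set_empty]
  · rw [hg, coset_smul_mem hh]

lemma satA2 {k : F} (hk : k ∉ H) :
    SatQI F (Maroti F H) []
      (.meet (.meet (.act k (.var 0)) (.var 0)) (.var 1),
       .meet (.act k (.var 0)) (.var 0)) := by
  intro v _
  show (k • v 0 ⊓ v 0) ⊓ v 1 = k • v 0 ⊓ v 0
  apply Subtype.ext
  rw [Maroti.inf_val, bot_val hk, Set.empty_inter]

lemma satA3 {k : F} (hk : k ∉ H) (g : F) :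
    SatQI F (Maroti F H) []
      (.act g (.meet (.act k (.var 0)) (.var 0)),
       .meet (.act k (.var 0)) (.var 0)) := by
  intro v _
  show g • (k • v 0 ⊓ v 0) = k • v 0 ⊓ v 0
  apply Subtype.ext
  rw [Maroti.smul_val, bot_val hk, Set.smul_set_empty]

lemma InQ_of_inj (F : Type) {A B : Type} [SemilatticeInf A] [SMul F A]
    [SemilatticeInf B] [SMul F B]
    (φ : A → B) (hinj : Function.Injective φ) (hφ : IsHom F φ) : InQ F B A := by
  intro prem c hB v hprem
  have key : ∀ t : SLTermN F, SLTermN.eval t (fun n => φ (v n)) = φ (SLTermN.eval t v) := by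
    intro t
    induction t with
    | var n => rfl
    | meet s t ihs iht => simp only [SLTermN.eval, ihs, iht, hφ.1]
    | act g t ih => simp only [SLTermN.eval, ih, hφ.2]
  apply hinj
  rw [← key, ← key]
  exact hB _ (fun p hp => by rw [key, key]; exact congrArg φ (hprem p hp))

lemma exists_pq {B : Type} [SemilatticeInf B] (hB : Nontrivial B) :
    ∃ p q : B, p ≠ q ∧ p ⊓ q = p := by
  obtain ⟨b, b', hbb⟩ := hB
  by_cases h : b ⊓ b' = b
  · exact ⟨b, b', hbb, h⟩
  · exact ⟨b ⊓ b', b, h, inf_eq_left.mpr inf_le_left⟩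

lemma exists_embedding {B : Type} [SemilatticeInf B] [MulAction F B]
    (hd : ∀ (g : F) (x y : B), g • (x ⊓ y) = g • x ⊓ g • y)
    (hQ : InQ F (Maroti F H) B) (hB : Nontrivial B) :
    ∃ φ : Maroti F H → B, Function.Injective φ ∧ IsHom F φ := by
  classical
  have fact1 : ∀ h ∈ H, ∀ x : B, h • x = x := by
    intro h hh x
    have := hQ [] (.act h (.var 0), .var 0) (satA1 hh) (fun _ => x) (by simp)
    simpa [SLTermN.eval] using this
  by_cases hH : H = ⊤
  · obtain ⟨p, q, hpq, hinf⟩ := exists_pq hB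
    have htriv : ∀ (g : F) (x : B), g • x = x := fun g x =>
      fact1 g (by rw [hH]; exact Subgroup.mem_top g) x
    have huniv : ∀ x : Maroti F H, x.1 ≠ ∅ → x.1 = Set.univ := by
      intro x hx
      rcases x.2 with h0 | ⟨g, hg⟩
      · exact absurd h0 hx
      · rw [hg, hH]
        simp [Subgroup.coe_top, Set.smul_set_univ]
    refine ⟨fun x => if x.1 = ∅ then p else q, ?_, ?_, ?_⟩
    · intro x y hxy
      simp only [] at hxy
      by_cases hx : x.1 = ∅ <;> by_cases hy : y.1 = ∅
      · exact Subtype.ext (hx.trans hy.symm)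
      · rw [if_pos hx, if_neg hy] at hxy; exact absurd hxy hpq
      · rw [if_neg hx, if_pos hy] at hxy; exact absurd hxy.symm hpq
      · exact Subtype.ext ((huniv x hx).trans (huniv y hy).symm)
    · intro x y
      dsimp only
      by_cases hx : x.1 = ∅
      · rw [if_pos hx, if_pos (show (x ⊓ y).1 = ∅ by rw [Maroti.inf_val, hx, Set.empty_inter])]
        by_cases hy : y.1 = ∅
        · rw [if_pos hy, inf_idem]
        · rw [if_neg hy, hinf]
      · by_cases hy : y.1 = ∅
        · rw [if_neg hx, if_pos hy,
            if_pos (show (x ⊓ y).1 = ∅ by rw [Maroti.inf_val, hy, Set.inter_empty]),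
            inf_comm q p, hinf]
        · have : (x ⊓ y).1 ≠ ∅ := by
            rw [Maroti.inf_val, huniv x hx, huniv y hy, Set.inter_self]
            exact Set.univ_nonempty.ne_empty
          rw [if_neg hx, if_neg hy, if_neg this, inf_idem]
    · intro g x
      dsimp only
      have hiff : (g • x).1 = ∅ ↔ x.1 = ∅ := by
        rw [Maroti.smul_val, Set.smul_set_eq_empty]
      rw [htriv]
      by_cases hx : x.1 = ∅
      · rw [if_pos hx, if_pos (hiff.mpr hx)]
      · rw [if_neg hx, if_neg (fun h => hx (hiff.mp h))]
  · obtain ⟨g₀, hg₀⟩ : ∃ g, g ∉ H := by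
      by_contra hc
      push_neg at hc
      exact hH ((Subgroup.eq_top_iff' H).mpr hc)
    have fact2 : ∀ k ∉ H, ∀ x y : B, (k • x ⊓ x) ⊓ y = k • x ⊓ x := by
      intro k hk x y
      have := hQ [] (.meet (.meet (.act k (.var 0)) (.var 0)) (.var 1),
          .meet (.act k (.var 0)) (.var 0)) (satA2 hk)
          (fun n => if n = 0 then x else y) (by simp)
      simpa [SLTermN.eval] using this
    have fact3 : ∀ k ∉ H, ∀ (g : F) (x : B), g • (k • x ⊓ x) = k • x ⊓ x := by
      intro k hk g x
      have := hQ [] (.act g (.meet (.act k (.var 0)) (.var 0)),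
          .meet (.act k (.var 0)) (.var 0)) (satA3 hk g) (fun _ => x) (by simp)
      simpa [SLTermN.eval] using this
    obtain ⟨b, b', hbb⟩ := hB
    set O : B := g₀ • b ⊓ b with hO
    have hOabs : ∀ y : B, O ⊓ y = O := fact2 g₀ hg₀ b
    have hbotO : ∀ k ∉ H, ∀ x : B, k • x ⊓ x = O := by
      intro k hk x
      have h1 := fact2 k hk x O
      have h2 := hOabs (k • x ⊓ x)
      rw [inf_comm] at h2
      rw [← h1, h2]
    have hOsmul : ∀ g : F, g • O = O := fun g => fact3 g₀ hg₀ g b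
    obtain ⟨c, hc⟩ : ∃ c : B, c ≠ O := by
      by_cases h : b = O
      · exact ⟨b', fun h' => hbb (h.trans h'.symm)⟩
      · exact ⟨b, h⟩
    have hcsmul : ∀ g : F, g • c ≠ O := by
      intro g h
      apply hc
      have := congrArg (g⁻¹ • ·) h
      simpa [inv_smul_smul, hOsmul] using this
    have smulc_eq : ∀ g g' : F, g • (H : Set F) = g' • (H : Set F) → g • c = g' • c := by
      intro g g' hgg
      have hh : g'⁻¹ * g ∈ H := mem_of_coset_eq hgg
      calc g • c = (g' * (g'⁻¹ * g)) • c := by rw [mul_inv_cancel_left]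
        _ = g' • ((g'⁻¹ * g) • c) := by rw [mul_smul]
        _ = g' • c := by rw [fact1 _ hh]
    have smulc_bot : ∀ g g' : F, g • (H : Set F) ∩ g' • (H : Set F) = ∅ →
        g • c ⊓ g' • c = O := by
      intro g g' hgg
      have hk : g'⁻¹ * g ∉ H := by
        intro hmem
        rw [coset_eq_of_rel hmem, Set.inter_self] at hgg
        exact coset_ne_empty g' hgg
      calc g • c ⊓ g' • c = g' • ((g'⁻¹ * g) • c) ⊓ g' • c := by
            rw [← mul_smul, mul_inv_cancel_left]
        _ = g' • ((g'⁻¹ * g) • c ⊓ c) := (hd _ _ _).symm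
        _ = g' • O := by rw [hbotO _ hk]
        _ = O := hOsmul g'
    have rep : ∀ x : Maroti F H, x.1 ≠ ∅ → ∃ g : F, x.1 = g • (H : Set F) :=
      fun x hx => x.2.resolve_left hx
    refine ⟨fun x => if hx : x.1 = ∅ then O else (rep x hx).choose • c, ?_, ?_, ?_⟩
    · intro x y hxy
      simp only [] at hxy
      by_cases hx : x.1 = ∅ <;> by_cases hy : y.1 = ∅
      · exact Subtype.ext (hx.trans hy.symm)
      · rw [dif_pos hx, dif_neg hy] at hxy
        exact absurd hxy.symm (hcsmul _)
      · rw [dif_neg hx, dif_pos hy] at hxy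
        exact absurd hxy (hcsmul _)
      · rw [dif_neg hx, dif_neg hy] at hxy
        apply Subtype.ext
        rw [(rep x hx).choose_spec, (rep y hy).choose_spec]
        by_contra hne'
        have hdisj : (rep x hx).choose • (H : Set F) ∩ (rep y hy).choose • (H : Set F) = ∅ := by
          by_contra hne2
          obtain ⟨z, hz1, hz2⟩ := Set.nonempty_iff_ne_empty.2 hne2
          exact hne' (coset_eq_of_mem hz1 hz2)
        have := smulc_bot _ _ hdisj
        rw [hxy, inf_idem] at this
        exact hcsmul _ this
    · intro x y
      dsimp only
      by_cases hx : x.1 = ∅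
      · rw [dif_pos hx,
          dif_pos (show (x ⊓ y).1 = ∅ by rw [Maroti.inf_val, hx, Set.empty_inter]), hOabs]
      · by_cases hy : y.1 = ∅
        · rw [dif_neg hx, dif_pos hy,
            dif_pos (show (x ⊓ y).1 = ∅ by rw [Maroti.inf_val, hy, Set.inter_empty]),
            inf_comm _ O, hOabs]
        · by_cases hxy : (x ⊓ y).1 = ∅
          · rw [dif_pos hxy, dif_neg hx, dif_neg hy]
            refine (smulc_bot _ _ ?_).symm
            rw [← (rep x hx).choose_spec, ← (rep y hy).choose_spec, ← Maroti.inf_val, hxy]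
          · rw [dif_neg hxy, dif_neg hx, dif_neg hy]
            have hint : (x.1 ∩ y.1) ≠ ∅ := by rwa [← Maroti.inf_val]
            obtain ⟨z, hz1, hz2⟩ := Set.nonempty_iff_ne_empty.2 hint
            rw [(rep x hx).choose_spec] at hz1
            rw [(rep y hy).choose_spec] at hz2
            have hxyeq : (rep x hx).choose • (H : Set F) = (rep y hy).choose • (H : Set F) :=
              coset_eq_of_mem hz1 hz2
            have h1 : x.1 ∩ y.1 =
                (rep x hx).choose • (H : Set F) ∩ (rep y hy).choose • (H : Set F) :=
              congrArg₂ (· ∩ ·) (rep x hx).choose_spec (rep y hy).choose_spec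
            have hval : (x ⊓ y).1 = (rep x hx).choose • (H : Set F) :=
              (Maroti.inf_val x y).trans (h1.trans (by rw [← hxyeq, Set.inter_self]))
            rw [smulc_eq _ _ ((rep _ hxy).choose_spec.symm.trans hval),
              smulc_eq (rep y hy).choose (rep x hx).choose hxyeq.symm, inf_idem]
    · intro g x
      dsimp only
      by_cases hx : x.1 = ∅
      · rw [dif_pos hx,
          dif_pos (show (g • x).1 = ∅ by rw [Maroti.smul_val, hx, Set.smul_set_empty]), hOsmul]
      · have hgx : (g • x).1 ≠ ∅ := by
          rw [Maroti.smul_val]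
          intro h
          exact hx (Set.smul_set_eq_empty.mp h)
        rw [dif_neg hgx, dif_neg hx]
        have hval : (g • x).1 = (g * (rep x hx).choose) • (H : Set F) :=
          (Maroti.smul_val g x).trans
            ((congrArg (g • ·) (rep x hx).choose_spec).trans (smul_smul g _ _))
        rw [smulc_eq _ _ ((rep _ hgx).choose_spec.symm.trans hval), mul_smul]

end Aux

/-- The Maróti semilattice `M(H,F)` is an `F`-semilattice (meet is intersection, the action
is by translation of cosets); if `H` is proper it is generated by each of its nonzero
elements, and consequently it generates a minimal quasivariety of `F`-semilattices. -/
theorem stmt_12 (F : Type) [CommGroup F] (H : Subgroup F) :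
    (∀ x y : Maroti F H, (x ⊓ y).1 = x.1 ∩ y.1) ∧
    (∀ (g : F) (x : Maroti F H), (g • x).1 = g • x.1) ∧
    (∀ (g : F) (x y : Maroti F H), g • (x ⊓ y) = g • x ⊓ g • y) ∧
    (H ≠ ⊤ →
      ∀ x : Maroti F H, x.1 ≠ ∅ → ∀ y : Maroti F H, ∃ t : SLTerm F, t.eval x = y) ∧
    MinGen F (Maroti F H) := by
  refine ⟨fun x y => rfl, fun g x => rfl, ?_, ?_, ?_, ?_⟩
  · intro g x y
    apply Subtype.ext
    rw [Maroti.smul_val, Maroti.inf_val, Maroti.inf_val, Maroti.smul_val, Maroti.smul_val,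
      Set.smul_set_inter]
  · intro hH x hx y
    obtain ⟨g, hg⟩ := x.2.resolve_left hx
    obtain ⟨g₀, hg₀⟩ : ∃ g : F, g ∉ H := by
      by_contra hc
      push_neg at hc
      exact hH ((Subgroup.eq_top_iff' H).mpr hc)
    rcases y.2 with h0 | ⟨g', hg'⟩
    · refine ⟨.meet (.act g₀ .var) .var, ?_⟩
      show g₀ • x ⊓ x = y
      apply Subtype.ext
      rw [h0, Maroti.inf_val, Maroti.smul_val, hg, smul_smul]
      apply coset_disjoint
      rwa [mul_comm g₀ g, inv_mul_cancel_left]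
    · refine ⟨.act (g' * g⁻¹) .var, ?_⟩
      show (g' * g⁻¹) • x = y
      apply Subtype.ext
      rw [Maroti.smul_val, hg, hg', smul_smul]
      congr 1
      group
  · refine ⟨⟨∅, Or.inl rfl⟩, marotiGen F H, ?_⟩
    intro h
    have : (∅ : Set F) = (1 : F) • (H : Set F) := congrArg Subtype.val h
    exact coset_ne_empty 1 this.symm
  · intro B _ _ hd hQ hB
    obtain ⟨φ, hinj, hhom⟩ := exists_embedding hd hQ hB
    exact InQ_of_inj F φ hinj hhom
end

section
/- For subgroups H₁ and H₂ of an abelian group F, the Maróti semilattices M(H₁,F) and M(H₂,F) are isomorphic as F-semilattices if and only if H₁ = H₂. Consequently they generate the same quasivariety if and only if H₁ = H₂. -/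
open Pointwise

theorem maroti_smul_of_mem {F : Type} [CommGroup F] {H : Subgroup F} {h : F} (hh : h ∈ H)
    (x : Maroti F H) : h • x = x := by
  apply Subtype.ext
  rw [Maroti.smul_val]
  rcases x.2 with he | ⟨g, hg⟩
  · rw [he]; exact Set.smul_set_empty
  · rw [hg, smul_smul, mul_comm, ← smul_smul, smul_coe_set hh]

theorem maroti_mem_of_smul_gen {F : Type} [CommGroup F] {H : Subgroup F} {h : F}
    (hx : h • marotiGen F H = marotiGen F H) : h ∈ H := by
  have := congrArg Subtype.val hx
  rw [Maroti.smul_val] at this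
  simp only [marotiGen, one_smul] at this
  have : h ∈ h • (H : Set F) := ⟨1, H.one_mem, mul_one h⟩
  rw [‹h • (H : Set F) = _›] at this
  exact this

/-- `M(H₁,F) ≅ M(H₂,F)` iff `H₁ = H₂`; consequently they generate the same quasivariety
iff `H₁ = H₂`. -/
theorem stmt_13 (F : Type) [CommGroup F] (H₁ H₂ : Subgroup F) :
    ((∃ φ : Maroti F H₁ → Maroti F H₂, Function.Bijective φ ∧ IsHom F φ) ↔ H₁ = H₂) ∧
    ((InQ F (Maroti F H₁) (Maroti F H₂) ∧ InQ F (Maroti F H₂) (Maroti F H₁)) ↔ H₁ = H₂) := by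
  constructor
  · constructor
    · rintro ⟨φ, ⟨hinj, hsurj⟩, hmeet, hsmul⟩
      ext h
      constructor
      · intro hh
        obtain ⟨x, hx⟩ := hsurj (marotiGen F H₂)
        apply maroti_mem_of_smul_gen (H := H₂)
        rw [← hx, ← hsmul, maroti_smul_of_mem hh]
      · intro hh
        apply maroti_mem_of_smul_gen (H := H₁)
        apply hinj
        rw [hsmul, maroti_smul_of_mem hh]
    · rintro rfl
      exact ⟨id, Function.bijective_id, fun _ _ => rfl, fun _ _ => rfl⟩
  · constructor
    · rintro ⟨h12, h21⟩
      ext h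
      constructor
      · intro hh
        apply maroti_mem_of_smul_gen (H := H₂)
        have := h12 [] (SLTermN.act h (SLTermN.var 0), SLTermN.var 0)
          (fun v _ => maroti_smul_of_mem hh (v 0)) (fun _ => marotiGen F H₂) (by simp)
        exact this
      · intro hh
        apply maroti_mem_of_smul_gen (H := H₁)
        have := h21 [] (SLTermN.act h (SLTermN.var 0), SLTermN.var 0)
          (fun v _ => maroti_smul_of_mem hh (v 0)) (fun _ => marotiGen F H₁) (by simp)
        exact this
    · rintro rfl
      exact ⟨fun _ _ h => h, fun _ _ h => h⟩
end

section
/- Let K be a subgroup of an abelian group F, T a transversal of the cosets of K in F, and U a K-semilattice. Define the structure B on {o} ∪ (U × T) by: (u,t) ∧ (v,t) = (u∧v, t); (u,t₁) ∧ (v,t₂) = o when t₁ ≠ t₂; x ∧ o = o; g(o) = o; and g(u,t) = (gtf⁻¹(u), f) where f is the unique element of T ∩ gtK. Then B is an F-semilattice. -/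
open Pointwise

/-- `T` is a transversal of the cosets of `K` in `F`: it meets each coset in exactly one
element. -/
def IsTransversal (F : Type) [CommGroup F] (K : Subgroup F) (T : Set F) : Prop :=
  ∀ g : F, ∃! t : F, t ∈ T ∧ t ∈ g • (K : Set F)

/-- `inf` and `smul` make `A` into an `F`-semilattice (axioms (i)–(iv)). -/
def IsFSemilatticeOps (F A : Type) [CommGroup F] (inf : A → A → A) (smul : F → A → A) : Prop :=
  (∀ x y, inf x y = inf y x) ∧ (∀ x y z, inf (inf x y) z = inf x (inf y z)) ∧
  (∀ x, inf x x = x) ∧ (∀ x, smul 1 x = x) ∧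
  (∀ (f g : F) (x), smul f (smul g x) = smul (f * g) x) ∧
  (∀ (g : F) (x y), smul g (inf x y) = inf (smul g x) (smul g y))

/-- The defining equations of the twisted multiple `B(K,F,U)` on `{o} ∪ (U × T)`
(with `none` playing the role of `o`):  `(u,t) ∧ (v,t) = (u ⊓ v, t)`,
`(u,t₁) ∧ (v,t₂) = o` for `t₁ ≠ t₂`, `x ∧ o = o ∧ x = o`, `g(o) = o`, and
`g(u,t) = (gtf⁻¹(u), f)` where `f` is the unique element of `T ∩ gtK`. -/
def TwistedSpec (F : Type) [CommGroup F] (K : Subgroup F) (T : Set F)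
    (U : Type) [SemilatticeInf U] [MulAction K U]
    (inf : Option (U × T) → Option (U × T) → Option (U × T))
    (smul : F → Option (U × T) → Option (U × T)) : Prop :=
  (∀ (u v : U) (t : T), inf (some (u, t)) (some (v, t)) = some (u ⊓ v, t)) ∧
  (∀ (u v : U) (t₁ t₂ : T), t₁ ≠ t₂ → inf (some (u, t₁)) (some (v, t₂)) = none) ∧
  (∀ x, inf x none = none) ∧ (∀ x, inf none x = none) ∧
  (∀ g : F, smul g none = none) ∧
  (∀ (g : F) (u : U) (t : T) (f : F) (hfT : f ∈ T)
      (_ : f ∈ (g * (t : F)) • (K : Set F)) (hk : g * (t : F) * f⁻¹ ∈ K),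
      smul g (some (u, t)) = some ((⟨g * (t : F) * f⁻¹, hk⟩ : K) • u, ⟨f, hfT⟩))

section TwistedAux

open scoped Classical

variable {F : Type} [CommGroup F] {K : Subgroup F} {T : Set F}

lemma mem_coset_iff' (a f : F) : f ∈ a • (K : Set F) ↔ a * f⁻¹ ∈ K := by
  rw [Set.mem_smul_set_iff_inv_smul_mem, smul_eq_mul]
  constructor
  · intro h
    have := K.inv_mem h
    simpa [mul_inv_rev, mul_comm] using this
  · intro h
    have := K.inv_mem h
    simpa [mul_inv_rev, mul_comm] using this

noncomputable def trRep (hT : IsTransversal F K T) (a : F) : F := (hT a).choose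

lemma trRep_mem (hT : IsTransversal F K T) (a : F) : trRep hT a ∈ T :=
  (hT a).choose_spec.1.1

lemma trRep_coset (hT : IsTransversal F K T) (a : F) :
    trRep hT a ∈ a • (K : Set F) := (hT a).choose_spec.1.2

lemma trRep_k (hT : IsTransversal F K T) (a : F) : a * (trRep hT a)⁻¹ ∈ K :=
  (mem_coset_iff' a _).1 (trRep_coset hT a)

lemma trRep_unique (hT : IsTransversal F K T) (a : F) {f : F} (h1 : f ∈ T)
    (h2 : f ∈ a • (K : Set F)) : f = trRep hT a :=
  (hT a).choose_spec.2 f ⟨h1, h2⟩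

noncomputable def kRep (hT : IsTransversal F K T) (a : F) : K :=
  ⟨a * (trRep hT a)⁻¹, trRep_k hT a⟩

lemma trRep_self (hT : IsTransversal F K T) {t : F} (ht : t ∈ T) :
    trRep hT t = t := by
  refine (trRep_unique hT t ht ?_).symm
  rw [mem_coset_iff']
  simpa using K.one_mem

lemma trRep_mul (hT : IsTransversal F K T) (f a : F) :
    trRep hT (f * trRep hT a) = trRep hT (f * a) := by
  refine trRep_unique hT (f * a) (trRep_mem hT _) ?_
  rw [mem_coset_iff']
  have h1 := trRep_k hT (f * trRep hT a)
  have h2 := trRep_k hT a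
  have := K.mul_mem h1 h2
  have he : f * trRep hT a * (trRep hT (f * trRep hT a))⁻¹ * (a * (trRep hT a)⁻¹)
      = f * a * (trRep hT (f * trRep hT a))⁻¹ := by
    simp [mul_comm, mul_assoc, mul_left_comm, inv_mul_cancel_left, mul_inv_cancel_left]
  rwa [he] at this

lemma kRep_mul (hT : IsTransversal F K T) (f a : F) :
    kRep hT (f * trRep hT a) * kRep hT a = kRep hT (f * a) := by
  ext
  show f * trRep hT a * (trRep hT (f * trRep hT a))⁻¹ * (a * (trRep hT a)⁻¹)
      = f * a * (trRep hT (f * a))⁻¹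
  rw [← trRep_mul hT f a]
  simp [mul_comm, mul_assoc, mul_left_comm, inv_mul_cancel_left, mul_inv_cancel_left]

lemma trRep_injT (hT : IsTransversal F K T) (g : F) {t₁ t₂ : F} (h1 : t₁ ∈ T)
    (h2 : t₂ ∈ T) (hne : t₁ ≠ t₂) : trRep hT (g * t₁) ≠ trRep hT (g * t₂) := by
  intro he
  apply hne
  have k1 := trRep_k hT (g * t₁)
  have k2 := trRep_k hT (g * t₂)
  rw [he] at k1
  have hk : t₁ * t₂⁻¹ ∈ K := by
    have := K.mul_mem k1 (K.inv_mem k2)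
    generalize trRep hT (g * t₂) = x at this
    have he2 : g * t₁ * x⁻¹ * (g * t₂ * x⁻¹)⁻¹ = t₁ * t₂⁻¹ := by
      rw [← div_eq_mul_inv, mul_assoc, mul_assoc, mul_div_mul_left_eq_div,
        div_eq_mul_inv, mul_inv_rev, inv_inv]
      simp [mul_assoc, mul_comm, mul_left_comm]
    rwa [he2] at this
  have e1 : t₁ = trRep hT t₁ := trRep_unique hT t₁ h1 (by
    rw [mem_coset_iff']; simpa using K.one_mem)
  have e2 : t₂ = trRep hT t₁ := trRep_unique hT t₁ h2 (by
    rw [mem_coset_iff']; exact hk)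
  rw [e1, e2]

noncomputable def infB {F : Type} {T : Set F} {U : Type} [SemilatticeInf U] :
    Option (U × T) → Option (U × T) → Option (U × T)
  | some (u, t₁), some (v, t₂) => if t₁ = t₂ then some (u ⊓ v, t₁) else none
  | _, _ => none

@[simp] lemma infB_some_some {F : Type} {T : Set F} {U : Type} [SemilatticeInf U]
    (u v : U) (t₁ t₂ : T) :
    infB (some (u, t₁)) (some (v, t₂)) = if t₁ = t₂ then some (u ⊓ v, t₁) else none := rfl

@[simp] lemma infB_none_left {F : Type} {T : Set F} {U : Type} [SemilatticeInf U]
    (x : Option (U × T)) : infB none x = none := rfl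

@[simp] lemma infB_none_right {F : Type} {T : Set F} {U : Type} [SemilatticeInf U]
    (x : Option (U × T)) : infB x none = none := by
  cases x with
  | none => rfl
  | some p => cases p; rfl

noncomputable def smulB (hT : IsTransversal F K T) {U : Type} [SemilatticeInf U]
    [MulAction K U] (g : F) : Option (U × T) → Option (U × T)
  | none => none
  | some (u, t) => some (kRep hT (g * t) • u, ⟨trRep hT (g * t), trRep_mem hT _⟩)

@[simp] lemma smulB_none (hT : IsTransversal F K T) {U : Type} [SemilatticeInf U]
    [MulAction K U] (g : F) : smulB hT g (none : Option (U × T)) = none := rfl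

@[simp] lemma smulB_some (hT : IsTransversal F K T) {U : Type} [SemilatticeInf U]
    [MulAction K U] (g : F) (u : U) (t : T) :
    smulB hT g (some (u, t)) =
      some (kRep hT (g * t) • u, ⟨trRep hT (g * t), trRep_mem hT _⟩) := rfl

end TwistedAux

/-- The twisted multiple `B(K,F,U)` is an `F`-semilattice. -/
theorem stmt_14 (F : Type) [CommGroup F] (K : Subgroup F) (T : Set F)
    (hT : IsTransversal F K T) (U : Type) [SemilatticeInf U] [MulAction K U]
    (hU : ∀ (k : K) (x y : U), k • (x ⊓ y) = k • x ⊓ k • y) :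
    ∃ (inf : Option (U × T) → Option (U × T) → Option (U × T))
      (smul : F → Option (U × T) → Option (U × T)),
      IsFSemilatticeOps F (Option (U × T)) inf smul ∧ TwistedSpec F K T U inf smul := by
  classical
  refine ⟨infB, smulB hT, ⟨?_, ?_, ?_, ?_, ?_, ?_⟩, ?_, ?_, ?_, ?_, ?_, ?_⟩
  · -- comm
    rintro (_ | ⟨u, t₁⟩) (_ | ⟨v, t₂⟩) <;> simp
    by_cases h : t₁ = t₂
    · subst h; simp [inf_comm]
    · simp [h, Ne.symm h]
  · -- assoc
    rintro (_ | ⟨u, t₁⟩) (_ | ⟨v, t₂⟩) (_ | ⟨w, t₃⟩) <;> simp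
    by_cases h : t₁ = t₂ <;> by_cases h2 : t₂ = t₃
    · simp [h, h2, inf_assoc]
    · have h3 : t₁ ≠ t₃ := fun hc => h2 (h.symm.trans hc)
      simp [h, h2, h3]
    · have h3 : t₁ ≠ t₃ := fun hc => h (hc.trans h2.symm)
      simp [h, h2, h3]
    · simp [h, h2]
  · -- idem
    rintro (_ | ⟨u, t⟩) <;> simp
  · -- one_smul
    rintro (_ | ⟨u, t⟩)
    · rfl
    · have h2 : kRep hT (1 * (t : F)) = 1 := by
        ext
        show 1 * (t : F) * (trRep hT (1 * (t : F)))⁻¹ = 1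
        rw [one_mul, trRep_self hT t.2]
        simp
      have hsub : (⟨trRep hT (1 * (t : F)), trRep_mem hT _⟩ : T) = t :=
        Subtype.ext (show trRep hT (1 * (t : F)) = (t : F) by
          rw [one_mul, trRep_self hT t.2])
      exact congrArg some (Prod.ext (by rw [h2, one_smul]) hsub)
  · -- mul_smul
    rintro f g (_ | ⟨u, t⟩)
    · rfl
    · have hk : kRep hT (f * trRep hT (g * (t : F))) • (kRep hT (g * (t : F)) • u)
          = kRep hT (f * g * (t : F)) • u := by
        rw [← mul_smul, kRep_mul hT f (g * (t : F)), mul_assoc]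
      have hsub : (⟨trRep hT (f * trRep hT (g * (t : F))), trRep_mem hT _⟩ : T)
          = ⟨trRep hT (f * g * (t : F)), trRep_mem hT _⟩ :=
        Subtype.ext (show trRep hT (f * trRep hT (g * (t : F)))
            = trRep hT (f * g * (t : F)) by
          rw [trRep_mul hT f (g * (t : F)), mul_assoc])
      exact congrArg some (Prod.ext hk hsub)
  · -- smul distributes
    rintro g (_ | ⟨u, t₁⟩) (_ | ⟨v, t₂⟩) <;> simp
    by_cases h : t₁ = t₂
    · subst h
      simp [hU]
    · have hne : trRep hT (g * (t₁ : F)) ≠ trRep hT (g * (t₂ : F)) :=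
        trRep_injT hT g t₁.2 t₂.2 fun hc => h (Subtype.ext hc)
      simp [h, hne]
  · -- spec 1
    intro u v t; simp
  · -- spec 2
    intro u v t₁ t₂ h; simp [h]
  · rintro (_ | ⟨u, t⟩) <;> simp
  · rintro (_ | ⟨u, t⟩) <;> simp
  · intro g; rfl
  · -- spec smul
    intro g u t f hfT hmem hk
    have hf : f = trRep hT (g * (t : F)) := trRep_unique hT _ hfT hmem
    simp only [smulB_some]
    subst hf
    rfl
end

section
/- The twisted-multiple F-semilattice B(K,F,U) = {o} ∪ (U × T) constructed from a subgroup K ≤ F, a transversal T of K, and a K-semilattice U, is independent, up to F-semilattice isomorphism, of the choice of the transversal T. -/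
open Pointwise

/-- Up to `F`-semilattice isomorphism, the twisted multiple `B(K,F,U)` does not depend on
the choice of the transversal. -/
theorem stmt_15 (F : Type) [CommGroup F] (K : Subgroup F) (T T' : Set F)
    (hT : IsTransversal F K T) (hT' : IsTransversal F K T')
    (U : Type) [SemilatticeInf U] [MulAction K U]
    (hU : ∀ (k : K) (x y : U), k • (x ⊓ y) = k • x ⊓ k • y)
    (inf : Option (U × T) → Option (U × T) → Option (U × T))
    (smul : F → Option (U × T) → Option (U × T))
    (hops : IsFSemilatticeOps F (Option (U × T)) inf smul)
    (hspec : TwistedSpec F K T U inf smul)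
    (inf' : Option (U × T') → Option (U × T') → Option (U × T'))
    (smul' : F → Option (U × T') → Option (U × T'))
    (hops' : IsFSemilatticeOps F (Option (U × T')) inf' smul')
    (hspec' : TwistedSpec F K T' U inf' smul') :
    ∃ φ : Option (U × T) → Option (U × T'),
      Function.Bijective φ ∧ φ none = none ∧
      (∀ x y, φ (inf x y) = inf' (φ x) (φ y)) ∧
      (∀ (g : F) (x), φ (smul g x) = smul' g (φ x)) := by

  obtain ⟨hmeet, hne, hn1, hn2, hso, hst⟩ := hspec
  obtain ⟨hmeet', hne', hn1', hn2', hso', hst'⟩ := hspec'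
  -- choose, for each t ∈ T, the unique element of T' in the coset tK
  choose tr htr htru using fun t : T => hT' (t : F)
  have htrT' : ∀ t : T, tr t ∈ T' := fun t => (htr t).1
  have htrK : ∀ t : T, tr t ∈ (t : F) • (K : Set F) := fun t => (htr t).2
  -- the twisting element of K
  have hkmem : ∀ t : T, (tr t)⁻¹ * (t : F) ∈ K := by
    intro t
    have h := Set.mem_smul_set_iff_inv_smul_mem.mp (htrK t)
    simpa [smul_eq_mul, mul_comm] using inv_mem h
  set kelt : T → K := fun t => ⟨(tr t)⁻¹ * (t : F), hkmem t⟩ with hkelt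
  -- injectivity of tr
  have trinj : ∀ t₁ t₂ : T, tr t₁ = tr t₂ → t₁ = t₂ := by
    intro t₁ t₂ h
    have hmem : ∀ t : T, (t : F) ∈ (tr t) • (K : Set F) := by
      intro t
      exact Set.mem_smul_set_iff_inv_smul_mem.mpr (by simpa [smul_eq_mul] using hkmem t)
    obtain ⟨s, _, huni⟩ := hT (tr t₁)
    have h1 : (t₁ : F) = s := huni _ ⟨t₁.2, hmem t₁⟩
    have h2 : (t₂ : F) = s := huni _ ⟨t₂.2, by rw [h]; exact hmem t₂⟩
    exact Subtype.ext (h1.trans h2.symm)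
  set φ : Option (U × T) → Option (U × T') :=
    Option.map (fun p => (kelt p.2 • p.1, ⟨tr p.2, htrT' p.2⟩)) with hφ
  refine ⟨φ, ⟨?_, ?_⟩, rfl, ?_, ?_⟩
  · -- injective
    rintro (_ | ⟨u₁, t₁⟩) (_ | ⟨u₂, t₂⟩) h <;> simp [hφ] at h ⊢
    obtain ⟨hu, ht⟩ := h
    have ht12 : t₁ = t₂ := trinj _ _ ht
    subst ht12
    exact ⟨smul_left_cancel _ hu, rfl⟩
  · -- surjective
    rintro (_ | ⟨v, s⟩)
    · exact ⟨none, rfl⟩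
    · obtain ⟨t, ⟨htT, htK⟩, _⟩ := hT (s : F)
      set t' : T := ⟨t, htT⟩
      have hsK : (s : F) ∈ t • (K : Set F) := by
        have h := Set.mem_smul_set_iff_inv_smul_mem.mp htK
        exact Set.mem_smul_set_iff_inv_smul_mem.mpr (by simpa [smul_eq_mul, mul_comm] using inv_mem h)
      have hts : tr t' = (s : F) := (htru t' s ⟨s.2, hsK⟩).symm
      refine ⟨some ((kelt t')⁻¹ • v, t'), ?_⟩
      simp only [hφ, Option.map_some, smul_inv_smul]
      exact congrArg some (Prod.ext rfl (Subtype.ext hts))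
  · -- inf
    rintro (_ | ⟨u, t₁⟩) (_ | ⟨v, t₂⟩) <;>
      simp only [hφ, Option.map_none, hn1, hn2, hn1', hn2', Option.map_some]
    by_cases h : t₁ = t₂
    · subst h
      rw [hmeet, hmeet', Option.map_some]
      have := hU (kelt t₁) u v
      simp [this]
    · rw [hne u v t₁ t₂ h, hne' _ _ _ _ (by
        intro hc
        exact h (trinj _ _ (congrArg Subtype.val hc))), Option.map_none]
  · -- smul
    rintro g (_ | ⟨u, t⟩)
    · simp [hφ, hso, hso']
    · obtain ⟨f, ⟨hfT, hfK⟩, _⟩ := hT (g * (t : F))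
      have hk : g * (t : F) * f⁻¹ ∈ K := by
        have h := Set.mem_smul_set_iff_inv_smul_mem.mp hfK
        rw [smul_eq_mul] at h
        have h2 : g * (t : F) * f⁻¹ = ((g * (t : F))⁻¹ * f)⁻¹ := by
          apply Additive.ofMul.injective
          simp only [ofMul_mul, ofMul_inv]
          abel
        rw [h2]; exact inv_mem h
      set ft : T := ⟨f, hfT⟩
      rw [hst g u t f hfT hfK hk]
      -- compute the RHS
      have hk' : g * (tr t) * (tr ft)⁻¹ ∈ K := by
        have h1 := hkmem t
        have h2 := hkmem ft
        have : g * (tr t) * (tr ft)⁻¹ =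
            (g * (t : F) * f⁻¹) * ((tr t)⁻¹ * (t : F))⁻¹ * ((tr ft)⁻¹ * (ft : F)) := by
          show g * (tr t) * (tr ft)⁻¹ =
            (g * (t : F) * f⁻¹) * ((tr t)⁻¹ * (t : F))⁻¹ * ((tr ft)⁻¹ * f)
          apply Additive.ofMul.injective
          simp only [ofMul_mul, ofMul_inv]
          abel
        rw [this]
        exact mul_mem (mul_mem hk (inv_mem h1)) h2
      have hfK' : (tr ft : F) ∈ (g * (tr t)) • (K : Set F) := by
        refine Set.mem_smul_set_iff_inv_smul_mem.mpr ?_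
        simpa [smul_eq_mul, mul_comm, mul_assoc, mul_left_comm] using inv_mem hk'
      simp only [hφ, Option.map_some]
      rw [hst' g (kelt t • u) ⟨tr t, htrT' t⟩ (tr ft) (htrT' ft) hfK' hk']
      refine congrArg some (Prod.ext ?_ rfl)
      show kelt ft • (⟨g * (t : F) * f⁻¹, hk⟩ : K) • u =
        (⟨g * (tr t) * (tr ft)⁻¹, hk'⟩ : K) • kelt t • u
      rw [← mul_smul, ← mul_smul]
      congr 1
      refine Subtype.ext ?_
      show (tr ft)⁻¹ * (ft : F) * (g * (t : F) * f⁻¹) =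
        g * (tr t) * (tr ft)⁻¹ * ((tr t)⁻¹ * (t : F))
      show (tr ft)⁻¹ * f * (g * (t : F) * f⁻¹) =
        g * (tr t) * (tr ft)⁻¹ * ((tr t)⁻¹ * (t : F))
      apply Additive.ofMul.injective
      simp only [ofMul_mul, ofMul_inv]
      abel
end

section
/- Let K be a proper subgroup of an abelian group F, T a transversal of K, and U a K-semilattice generated by an element a. Then for every t ∈ T, the element (a,t) generates the twisted-multiple F-semilattice B(K,F,U) on {o} ∪ (U × T). -/
/-- Evaluation of a unary term using explicitly given operations. -/
def SLTerm.evalRaw {F A : Type} (inf : A → A → A) (smul : F → A → A) : SLTerm F → A → A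
  | .var, a => a
  | .meet s t, a => inf (s.evalRaw inf smul a) (t.evalRaw inf smul a)
  | .act g t, a => smul g (t.evalRaw inf smul a)

open Pointwise

def liftTerm {F : Type} [CommGroup F] {K : Subgroup F} : SLTerm K → SLTerm F
  | .var => .var
  | .meet s t => .meet (liftTerm s) (liftTerm t)
  | .act k t => .act (k : F) (liftTerm t)

/-- If `K` is proper and `U` is generated by `a`, then `(a,t)` generates `B(K,F,U)` for
every `t ∈ T`. -/
theorem stmt_16 (F : Type) [CommGroup F] (K : Subgroup F) (hK : K ≠ ⊤) (T : Set F)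
    (hT : IsTransversal F K T) (U : Type) [SemilatticeInf U] [MulAction K U]
    (hU : ∀ (k : K) (x y : U), k • (x ⊓ y) = k • x ⊓ k • y)
    (a : U) (ha : ∀ u : U, ∃ s : SLTerm K, s.eval a = u)
    (inf : Option (U × T) → Option (U × T) → Option (U × T))
    (smul : F → Option (U × T) → Option (U × T))
    (hops : IsFSemilatticeOps F (Option (U × T)) inf smul)
    (hspec : TwistedSpec F K T U inf smul) :
    ∀ t : T, ∀ x : Option (U × T), ∃ s : SLTerm F,
      SLTerm.evalRaw inf smul s (some (a, t)) = x := by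
  intro t x
  obtain ⟨h1, h2, h3, h4, h5, h6⟩ := hspec
  -- lifting lemma
  have lift : ∀ s : SLTerm K,
      SLTerm.evalRaw inf smul (liftTerm s) (some (a, t)) = some (s.eval a, t) := by
    intro s
    induction s with
    | var => rfl
    | meet s1 s2 ih1 ih2 =>
        simp only [liftTerm, SLTerm.evalRaw, SLTerm.eval, ih1, ih2, h1]
    | act k s1 ih =>
        have hk : (k : F) * (t : F) * (t : F)⁻¹ ∈ K := by
          simpa [mul_inv_cancel_right] using k.2
        have hmem : (t : F) ∈ ((k : F) * (t : F)) • (K : Set F) := by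
          refine ⟨((k : F))⁻¹, K.inv_mem k.2, ?_⟩
          simp only [smul_eq_mul]; rw [mul_comm (k : F) (t : F), mul_inv_cancel_right]
        have := h6 (k : F) (s1.eval a) t (t : F) t.2 hmem hk
        simp only [liftTerm, SLTerm.evalRaw, SLTerm.eval, ih, this]
        congr 1
        have hke : (⟨(k : F) * (t : F) * (t : F)⁻¹, hk⟩ : K) = k :=
          Subtype.ext (mul_inv_cancel_right _ _)
        rw [hke]
  match x with
  | none =>
      obtain ⟨g, hg⟩ : ∃ g : F, g ∉ K := by
        by_contra h
        push_neg at h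
        exact hK ((Subgroup.eq_top_iff' K).mpr h)
      obtain ⟨f, ⟨hfT, hfC⟩, _⟩ := hT (g * (t : F))
      obtain ⟨k, hkK, hk⟩ := hfC
      have hkK' : g * (t : F) * f⁻¹ ∈ K := by
        have : g * (t : F) * f⁻¹ = k⁻¹ := by
          have hf : (g * (t : F)) * k = f := hk
          rw [← hf, mul_inv_rev, mul_comm k⁻¹, mul_inv_cancel_left]
        rw [this]; exact K.inv_mem hkK
      have hne : (⟨f, hfT⟩ : T) ≠ t := by
        intro h
        apply hg
        have hf : f = (t : F) := congrArg Subtype.val h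
        have : g * (t : F) * f⁻¹ ∈ K := hkK'
        rw [hf] at this
        simpa [mul_inv_cancel_right] using this
      refine ⟨.meet (.act g .var) .var, ?_⟩
      have := h6 g a t f hfT ⟨k, hkK, hk⟩ hkK'
      simp only [SLTerm.evalRaw, this]
      exact h2 _ _ _ _ hne
  | some (u, t') =>
      obtain ⟨s, hs⟩ := ha u
      refine ⟨.act ((t' : F) * (t : F)⁻¹) (liftTerm s), ?_⟩
      have hk1 : (t' : F) * (t : F)⁻¹ * (t : F) * (t' : F)⁻¹ ∈ K := by
        have : (t' : F) * (t : F)⁻¹ * (t : F) * (t' : F)⁻¹ = 1 := by group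
        rw [this]; exact K.one_mem
      have hmem : (t' : F) ∈ ((t' : F) * (t : F)⁻¹ * (t : F)) • (K : Set F) := by
        refine ⟨1, K.one_mem, ?_⟩
        simp [smul_eq_mul]
      have := h6 ((t' : F) * (t : F)⁻¹) (s.eval a) t (t' : F) t'.2 hmem hk1
      simp only [SLTerm.evalRaw, lift s, this]
      have hke : (⟨(t' : F) * (t : F)⁻¹ * (t : F) * (t' : F)⁻¹, hk1⟩ : K) = 1 :=
        Subtype.ext (by rw [OneMemClass.coe_one]; group)
      rw [hke, one_smul, hs]
end

section
/- Let R be a minimal quasivariety of F-semilattices whose 1-generated free algebra A = Fr_R(a) is nontrivial and has a least element o. Then K = {g ∈ F : a ∧ g(a) ≠ o} is a subgroup of F, and for f₁,…,fₙ ∈ F one has f₁(a) ∧ ⋯ ∧ fₙ(a) ≠ o if and only if f₁K = ⋯ = fₙK. -/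
section AuxGen

variable {F : Type} [CommGroup F] {A : Type} [SemilatticeInf A] [MulAction F A]

lemma gen_meet {b x y : A} (hx : x ∈ genSet F b) (hy : y ∈ genSet F b) :
    x ⊓ y ∈ genSet F b := by
  obtain ⟨s, rfl⟩ := hx; obtain ⟨t, rfl⟩ := hy; exact ⟨s.meet t, rfl⟩

lemma gen_smul {b x : A} (g : F) (hx : x ∈ genSet F b) : g • x ∈ genSet F b := by
  obtain ⟨t, rfl⟩ := hx; exact ⟨t.act g, rfl⟩

lemma gen_self (b : A) : b ∈ genSet F b := ⟨.var, rfl⟩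

instance genSL (b : A) : SemilatticeInf (genSet F b) :=
  Subtype.semilatticeInf fun _ _ hx hy => gen_meet hx hy

instance genMA (b : A) : MulAction F (genSet F b) where
  smul g x := ⟨g • x.1, gen_smul g x.2⟩
  one_smul x := Subtype.ext (one_smul F x.1)
  mul_smul g h x := Subtype.ext (mul_smul g h x.1)

lemma gen_coe_inf (b : A) (x y : genSet F b) :
    ((x ⊓ y : genSet F b) : A) = (x : A) ⊓ (y : A) := rfl

lemma gen_coe_smul (b : A) (g : F) (x : genSet F b) :
    ((g • x : genSet F b) : A) = g • (x : A) := rfl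

lemma evalN_coe (b : A) (t : SLTermN F) (v : ℕ → genSet F b) :
    ((t.eval v : genSet F b) : A) = t.eval (fun n => ((v n : A))) := by
  induction t with
  | var n => rfl
  | meet s t hs ht =>
      show ((s.eval v ⊓ t.eval v : genSet F b) : A) = _
      rw [gen_coe_inf, hs, ht]; rfl
  | act g t ht =>
      show ((g • t.eval v : genSet F b) : A) = _
      rw [gen_coe_smul, ht]; rfl

lemma inQ_gen (b : A) : InQ F A (genSet F b) := by
  intro prem c h v hp
  refine Subtype.ext ?_
  rw [evalN_coe, evalN_coe]
  exact h _ fun p hp' => by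
    rw [← evalN_coe, ← evalN_coe]
    exact congrArg Subtype.val (hp p hp')

lemma smul_mono' (hA : ∀ (g : F) (x y : A), g • (x ⊓ y) = g • x ⊓ g • y)
    {x y : A} (g : F) (h : x ≤ y) : g • x ≤ g • y := by
  have : g • x ⊓ g • y = g • x := by rw [← hA, inf_eq_left.mpr h]
  exact inf_eq_left.mp this

lemma smul_zero' (hA : ∀ (g : F) (x y : A), g • (x ⊓ y) = g • x ⊓ g • y)
    {o : A} (ho : ∀ x : A, o ≤ x) (g : F) : g • o = o := by
  refine le_antisymm ?_ (ho _)
  have := smul_mono' hA g (ho (g⁻¹ • o))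
  rwa [smul_inv_smul] at this

/-- The key minimality lemma: if some nonzero `b` satisfies `b ⊓ g•b = o`,
then every `x` satisfies `x ⊓ g•x = o`. -/
lemma keyL (hA : ∀ (g : F) (x y : A), g • (x ⊓ y) = g • x ⊓ g • y)
    {o : A} (ho : ∀ x : A, o ≤ x) (hmin : MinGen F A)
    {b : A} (hb : b ≠ o) (g : F) (hbg : b ⊓ g • b = o) :
    ∀ x : A, x ⊓ g • x = o := by
  have smul_o : ∀ f : F, f • o = o := smul_zero' hA ho
  have ho_mem : o ∈ genSet F b :=
    ⟨SLTerm.meet .var (.act g .var), by simpa [SLTerm.eval] using hbg⟩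
  have hz : ∀ x ∈ genSet F b, x ⊓ g • x = o := by
    rintro x ⟨t, rfl⟩
    induction t with
    | var => exact hbg
    | meet s t hs ht =>
        show (s.eval b ⊓ t.eval b) ⊓ g • (s.eval b ⊓ t.eval b) = o
        rw [hA]
        refine le_antisymm ?_ (ho _)
        calc (s.eval b ⊓ t.eval b) ⊓ (g • s.eval b ⊓ g • t.eval b)
            ≤ s.eval b ⊓ g • s.eval b := inf_le_inf inf_le_left inf_le_left
          _ = o := hs
    | act f t ht =>
        show (f • t.eval b) ⊓ g • (f • t.eval b) = o
        rw [show (g : F) • f • t.eval b = f • g • t.eval b by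
              rw [smul_smul, smul_smul, mul_comm],
            ← hA, ht, smul_o]
  -- the generated subalgebra
  have hnt : Nontrivial (genSet F b) :=
    ⟨⟨b, gen_self b⟩, ⟨o, ho_mem⟩, fun h => hb (congrArg Subtype.val h)⟩
  have hdist : ∀ (g : F) (x y : genSet F b), g • (x ⊓ y) = g • x ⊓ g • y :=
    fun g x y => Subtype.ext (hA g x.1 y.1)
  have hinq : InQ F (genSet F b) A := hmin.2 (genSet F b) hdist (inQ_gen b) hnt
  set t1 : SLTermN F :=
    .meet (.meet (.var 0) (.act g (.var 0))) (.meet (.var 1) (.act g (.var 1))) with ht1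
  set t2 : SLTermN F := .meet (.var 0) (.act g (.var 0)) with ht2
  have hsatB : SatQI F (genSet F b) [] (t1, t2) := by
    intro v _
    refine Subtype.ext ?_
    rw [ht1, ht2]
    show ((SLTermN.eval _ v : genSet F b) : A) = ((SLTermN.eval _ v : genSet F b) : A)
    rw [evalN_coe, evalN_coe]
    simp only [SLTermN.eval]
    rw [hz _ (v 0).2, hz _ (v 1).2, inf_idem]
  have hsatA : SatQI F A [] (t1, t2) := hinq [] (t1, t2) hsatB
  intro x
  have := hsatA (fun n => if n = 0 then x else o) (by simp)
  rw [ht1, ht2] at this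
  simp only [SLTermN.eval] at this
  norm_num [smul_o] at this
  exact le_antisymm this (ho _)

end AuxGen

/-- For a minimal quasivariety whose nontrivial 1-generated free algebra `A` (free
generator `a`) has a least element `o`, the set `K = {g : F | a ⊓ g•a ≠ o}` is a subgroup
of `F`, and a meet `f₁(a) ⊓ ⋯ ⊓ fₙ(a)` is nonzero iff `f₁K = ⋯ = fₙK`. -/
theorem stmt_18 (F : Type) [CommGroup F] (A : Type) [SemilatticeInf A] [MulAction F A]
    (hA : ∀ (g : F) (x y : A), g • (x ⊓ y) = g • x ⊓ g • y)
    (hnt : Nontrivial A)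
    (a : A) (hgen : ∀ x : A, ∃ t : SLTerm F, t.eval a = x)
    (o : A) (ho : ∀ x : A, o ≤ x)
    (hmin : MinGen F A) :
    ∃ K : Subgroup F, (K : Set F) = {g : F | a ⊓ g • a ≠ o} ∧
      ∀ (n : ℕ) (f : Fin (n + 1) → F),
        ((Finset.univ.inf' Finset.univ_nonempty fun i => f i • a) ≠ o ↔
          ∀ i j : Fin (n + 1), (f i)⁻¹ * f j ∈ K) := by
  classical
  have smul_o : ∀ f : F, f • o = o := smul_zero' hA ho
  have a_ne_o : a ≠ o := by
    intro h
    have hall : ∀ t : SLTerm F, t.eval a = o := by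
      intro t
      induction t with
      | var => exact h
      | meet s t hs ht => show s.eval a ⊓ t.eval a = o; rw [hs, ht, inf_idem]
      | act g t ht => show g • t.eval a = o; rw [ht, smul_o]
    obtain ⟨x, y, hxy⟩ := hnt
    obtain ⟨s, rfl⟩ := hgen x
    obtain ⟨t, rfl⟩ := hgen y
    exact hxy ((hall s).trans (hall t).symm)
  -- keyK : nonzero meets propagate
  have keyK : ∀ (x : A) (g : F), x ≠ o → a ⊓ g • a ≠ o → x ⊓ g • x ≠ o := by
    intro x g hx hg h
    exact hg (keyL hA ho hmin hx g h a)
  have smul_ne : ∀ (g : F) (x : A), x ≠ o → g • x ≠ o := by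
    intro g x hx h
    apply hx
    have := congrArg (g⁻¹ • ·) h
    simpa [smul_o] using this
  refine ⟨{ carrier := {g : F | a ⊓ g • a ≠ o}
          , one_mem' := by simpa using a_ne_o
          , mul_mem' := ?_
          , inv_mem' := ?_ }, rfl, ?_⟩
  · -- mul_mem'
    intro g h hg hh
    have h1 : (a ⊓ g • a) ⊓ h • (a ⊓ g • a) ≠ o := keyK _ h hg hh
    show a ⊓ (g * h) • a ≠ o
    intro hne
    apply h1
    refine le_antisymm ?_ (ho _)
    rw [hA]
    calc (a ⊓ g • a) ⊓ (h • a ⊓ h • g • a)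
        ≤ a ⊓ h • g • a := inf_le_inf inf_le_left inf_le_right
      _ = a ⊓ (g * h) • a := by rw [smul_smul, mul_comm]
      _ = o := hne
  · -- inv_mem'
    intro g hg
    show a ⊓ g⁻¹ • a ≠ o
    intro hne
    apply hg
    have := congrArg (g • ·) hne
    simp only [hA, smul_inv_smul, smul_o] at this
    rwa [inf_comm] at this
  · -- main equivalence
    intro n f
    constructor
    · intro hne i j
      show a ⊓ ((f i)⁻¹ * f j) • a ≠ o
      intro heq
      have hfij : f i • a ⊓ f j • a = o := by
        have := congrArg (f i • ·) heq
        simpa [hA, smul_smul, smul_o] using this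
      apply hne
      refine le_antisymm ?_ (ho _)
      rw [← hfij]
      exact le_inf (Finset.inf'_le _ (Finset.mem_univ i))
        (Finset.inf'_le _ (Finset.mem_univ j))
    · intro hK
      have hK' : ∀ i j : Fin (n + 1), a ⊓ ((f i)⁻¹ * f j) • a ≠ o := fun i j => hK i j
      have main : ∀ (s : Finset (Fin (n + 1))) (hs : s.Nonempty),
          s.inf' hs (fun i => f i • a) ≠ o := by
        intro s hs
        induction hs using Finset.Nonempty.cons_induction with
        | singleton i => simpa using smul_ne (f i) a a_ne_o
        | cons j s hj hsne ih =>
          obtain ⟨i0, hi0⟩ := hsne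
          have hs3 : s.Nonempty := ⟨i0, hi0⟩
          rw [Finset.inf'_cons hs3]
          have ihx : s.inf' hs3 (fun i => f i • a) ≠ o := ih
          have hxle : s.inf' hs3 (fun i => f i • a) ≤ f i0 • a := Finset.inf'_le _ hi0
          have hgx : ((f i0)⁻¹ * f j) • s.inf' hs3 (fun i => f i • a) ≤ f j • a := by
            have h2 := smul_mono' hA ((f i0)⁻¹ * f j) hxle
            have h3 : (f i0)⁻¹ * f j * f i0 = f j := by
              rw [mul_comm ((f i0)⁻¹) (f j), mul_assoc, inv_mul_cancel, mul_one]
            rwa [smul_smul, h3] at h2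
          intro h0
          have h0' : f j • a ⊓ s.inf' hs3 (fun i => f i • a) = o := h0
          have hle : s.inf' hs3 (fun i => f i • a) ⊓
              ((f i0)⁻¹ * f j) • s.inf' hs3 (fun i => f i • a) ≤
              f j • a ⊓ s.inf' hs3 (fun i => f i • a) :=
            le_inf (inf_le_right.trans hgx) inf_le_left
          exact keyK (s.inf' hs3 (fun i => f i • a)) ((f i0)⁻¹ * f j) ihx (hK' i0 j)
            (le_antisymm (le_of_le_of_eq hle h0') (ho _))
      exact main Finset.univ Finset.univ_nonempty
end
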